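/- Let 0 < λ, μ < 1, p, u, v ∈ ℝ, and let Q = Q₀ + (1/4)·[[p+λ+μ,0,0,u],[0,−p+λ−μ,v,0],[0,v,−p−λ+μ,0],[u,0,0,p−λ−μ]] where Q₀ = (1/4)·[[1,0,0,1],[0,1,1,0],[0,1,1,0],[1,0,0,1]]. Then Q is positive semidefinite if and only if −1 + √((λ+μ)² + (1+u)²) ≤ p ≤ 1 − √((λ−μ)² + (1+v)²). -/

import Mathlib

lemma quad_to_sqrt (a b c : ℝ)
    (h : ∀ x y : ℝ, 0 ≤ (a+b)*x^2 + 2*c*x*y + (a-b)*y^2) :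
    Real.sqrt (b^2 + c^2) ≤ a := by
  have h1 := h 1 0
  have h2 := h 0 1
  have h3 := h 1 1
  have h4 := h 1 (-1)
  have h5 := h c (-(a+b))
  have h6 := h (a-b) (-c)
  have ha : 0 ≤ a := by nlinarith
  have hdet : b^2 + c^2 ≤ a^2 := by
    rcases eq_or_lt_of_le ha with hz | hz
    · have hb : b = 0 := by nlinarith
      have hc : c = 0 := by nlinarith
      nlinarith
    · nlinarith
  calc Real.sqrt (b^2+c^2) ≤ Real.sqrt (a^2) := Real.sqrt_le_sqrt hdet
    _ = a := Real.sqrt_sq ha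

lemma sqrt_to_quad (a b c x y : ℝ) (h : Real.sqrt (b^2 + c^2) ≤ a) :
    0 ≤ (a+b)*x^2 + 2*c*x*y + (a-b)*y^2 := by
  have ha : 0 ≤ a := le_trans (Real.sqrt_nonneg _) h
  have hdet : b^2 + c^2 ≤ a^2 := by
    have := Real.sq_sqrt (by positivity : (0:ℝ) ≤ b^2 + c^2)
    nlinarith [Real.sqrt_nonneg (b^2+c^2)]
  rcases eq_or_lt_of_le ha with hz | hz
  · have hb : b = 0 := by nlinarith
    have hc : c = 0 := by nlinarith
    rw [hb, hc, ← hz]; ring_nf; exact le_refl 0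
  · nlinarith [sq_nonneg ((a+b)*x + c*y), sq_nonneg (c*x + (a-b)*y),
      mul_nonneg (by nlinarith : (0:ℝ) ≤ a^2 - b^2 - c^2) (by positivity : (0:ℝ) ≤ x^2 + y^2)]

theorem Q_posSemidef_iff (lam mu p u v : ℝ) (hlam : 0 < lam) (hlam1 : lam < 1)
    (hmu : 0 < mu) (hmu1 : mu < 1) :
    let Q0 : Matrix (Fin 4) (Fin 4) ℝ :=
      (1 / 4 : ℝ) • !![1, 0, 0, 1; 0, 1, 1, 0; 0, 1, 1, 0; 1, 0, 0, 1]
    let Q : Matrix (Fin 4) (Fin 4) ℝ := Q0 + (1 / 4 : ℝ) •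
      !![p + lam + mu, 0, 0, u;
         0, -p + lam - mu, v, 0;
         0, v, -p - lam + mu, 0;
         u, 0, 0, p - lam - mu]
    (Q.PosSemidef ↔
      -1 + Real.sqrt ((lam + mu) ^ 2 + (1 + u) ^ 2) ≤ p ∧
        p ≤ 1 - Real.sqrt ((lam - mu) ^ 2 + (1 + v) ^ 2)) := by
  intro Q0 Q
  have hform : ∀ x : Fin 4 → ℝ, dotProduct (star x) (Q.mulVec x) =
      (1/4) * (((1+p)+(lam+mu)) * (x 0)^2 + 2*(1+u)*(x 0)*(x 3) + ((1+p)-(lam+mu)) * (x 3)^2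
        + ((1-p)+(lam-mu)) * (x 1)^2 + 2*(1+v)*(x 1)*(x 2) + ((1-p)-(lam-mu)) * (x 2)^2) := by
    intro x
    simp [Q, Q0, dotProduct, Matrix.mulVec, Fin.sum_univ_four, Matrix.add_apply,
      Matrix.smul_apply]
    ring
  rw [Matrix.posSemidef_iff_dotProduct_mulVec]
  constructor
  · rintro ⟨-, hq⟩
    constructor
    · have : Real.sqrt ((lam+mu)^2 + (1+u)^2) ≤ 1 + p := by
        apply quad_to_sqrt
        intro x y
        have := hq ![x, 0, 0, y]
        rw [hform] at this
        simp at this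
        nlinarith
      linarith
    · have : Real.sqrt ((lam-mu)^2 + (1+v)^2) ≤ 1 - p := by
        apply quad_to_sqrt
        intro x y
        have := hq ![0, x, y, 0]
        rw [hform] at this
        simp at this
        nlinarith
      linarith
  · rintro ⟨h1, h2⟩
    constructor
    · show Q.conjTranspose = Q
      ext i j
      fin_cases i <;> fin_cases j <;>
        simp [Q, Q0, Matrix.add_apply, Matrix.smul_apply, Matrix.conjTranspose_apply]
    · intro x
      rw [hform]
      have hA : 0 ≤ ((1+p)+(lam+mu)) * (x 0)^2 + 2*(1+u)*(x 0)*(x 3) + ((1+p)-(lam+mu)) * (x 3)^2 :=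
        sqrt_to_quad (1+p) (lam+mu) (1+u) (x 0) (x 3) (by linarith)
      have hB : 0 ≤ ((1-p)+(lam-mu)) * (x 1)^2 + 2*(1+v)*(x 1)*(x 2) + ((1-p)-(lam-mu)) * (x 2)^2 :=
        sqrt_to_quad (1-p) (lam-mu) (1+v) (x 1) (x 2) (by linarith)
      linarith
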